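/- Let u and v be non-adjacent vertices in a DAG G, and let l be a path from u to v. If some vertex of l lies outside An({u,v}) (the union of {u,v} with all their ancestors), then l is blocked by every subset S of an({u,v}) (the ancestors of u or v, excluding u, v themselves). -/

import Mathlib

/-- A directed graph (given by its edge relation) is acyclic. -/
def Acyclic {V : Type*} (E : V → V → Prop) : Prop :=
  ∀ v, ¬ Relation.TransGen E v v

/-- `b` is a collider between consecutive path vertices `a, b, c`:
both edges point into `b`. -/
def Collider {V : Type*} (E : V → V → Prop) (a b c : V) : Prop :=
  E a b ∧ E c b

/-- Descendants of `u` (including `u` itself): reachable by a directed path. -/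
def Desc {V : Type*} (E : V → V → Prop) (u : V) : Set V :=
  {w | Relation.ReflTransGen E u w}

/-- Ancestors of some vertex of `W`, excluding `W` itself: `an(W)`. -/
def anc {V : Type*} (E : V → V → Prop) (W : Set V) : Set V :=
  {x | x ∉ W ∧ ∃ w ∈ W, Relation.TransGen E x w}

/-- `An(W) = W ∪ an(W)`. -/
def Anc {V : Type*} (E : V → V → Prop) (W : Set V) : Set V :=
  W ∪ anc E W

/-- `l` is an (undirected) path from `u` to `v` in the directed graph `E`:
a duplicate-free list of vertices starting at `u`, ending at `v`,
with consecutive vertices joined by an edge (in either direction). -/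
def IsPath {V : Type*} (E : V → V → Prop) (u v : V) (l : List V) : Prop :=
  l.Chain' (fun a b => E a b ∨ E b a) ∧ l.head? = some u ∧ l.getLast? = some v ∧ l.Nodup

/-- The set of intermediate (interior) vertices of a path `l`:
vertices having a predecessor and successor on `l`. -/
def Interior {V : Type*} (l : List V) : Set V :=
  {b | ∃ a c, [a, b, c] <:+: l}

/-- The path `l` is blocked (d-separated) by `S`: it contains a non-collider
vertex in `S`, or a collider vertex `b` such that neither `b` nor any
descendant of `b` is in `S`. -/
def Blocked {V : Type*} (E : V → V → Prop) (l : List V) (S : Set V) : Prop :=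
  ∃ a b c, [a, b, c] <:+: l ∧
    ((¬ Collider E a b c ∧ b ∈ S) ∨ (Collider E a b c ∧ ∀ w ∈ Desc E b, w ∉ S))

/-- `u` and `v` are d-separated by `S`: every path between them is blocked. -/
def DSep {V : Type*} (E : V → V → Prop) (u v : V) (S : Set V) : Prop :=
  ∀ l, IsPath E u v l → Blocked E l S

/-- Sets `A` and `B` are d-separated by `S`. -/
def DSepSet {V : Type*} (E : V → V → Prop) (A B S : Set V) : Prop :=
  ∀ u ∈ A, ∀ v ∈ B, DSep E u v S

/-- The union of the tree nodes in the subtree on the `i`-side after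
removing the tree edge `{i, j}`. -/
def SubtreeVerts {V ι : Type*} (T : SimpleGraph ι) (C : ι → Set V) (i j : ι) : Set V :=
  ⋃ k ∈ {k | (T.deleteEdges {s(i, j)}).Reachable i k}, C k

/-- `T` (with node sets `C`) is a d-separation tree for the DAG `E`:
`T` is a tree, the node sets cover `V`, and for each tree edge the separator
`C i ∩ C j` d-separates the remaining vertices of the two subtrees. -/
def IsDSepTree {V ι : Type*} (E : V → V → Prop) (T : SimpleGraph ι) (C : ι → Set V) : Prop :=
  T.IsTree ∧ (⋃ i, C i) = Set.univ ∧
    ∀ i j, T.Adj i j →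
      DSepSet E (SubtreeVerts T C i j \ (C i ∩ C j))
        (SubtreeVerts T C j i \ (C i ∩ C j)) (C i ∩ C j)

/-- if `u, v` are non-adjacent in a DAG and some vertex of the
path `l` from `u` to `v` lies outside `An({u,v})`, then `l` is blocked by
every subset `S` of `an({u,v})`. -/
lemma anc_closed {V : Type*} {E : V → V → Prop} {W : Set V} {a b : V}
    (hab : E a b) (hb : b ∈ Anc E W) : a ∈ Anc E W := by
  by_cases ha : a ∈ W
  · exact Or.inl ha
  · rcases hb with hb | ⟨hb', w, hw, hbw⟩
    · exact Or.inr ⟨ha, b, hb, Relation.TransGen.single hab⟩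
    · exact Or.inr ⟨ha, w, hw, (Relation.TransGen.single hab).trans hbw⟩

lemma desc_disj {V : Type*} {E : V → V → Prop} {W : Set V} {b : V}
    (hb : b ∉ Anc E W) {S : Set V} (hS : S ⊆ anc E W) :
    ∀ w ∈ Desc E b, w ∉ S := by
  intro w hw hwS
  obtain ⟨hwW, z, hz, hwz⟩ := hS hwS
  exact hb (Or.inr ⟨fun h => hb (Or.inl h), z, hz,
    Relation.TransGen.trans_right hw hwz⟩)

theorem stmt_2 {V : Type*} (E : V → V → Prop) (hG : Acyclic E)
    (u v : V) (hne : u ≠ v) (huv : ¬ E u v) (hvu : ¬ E v u)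
    (l : List V) (hl : IsPath E u v l)
    (hout : ∃ x ∈ l, x ∉ Anc E {u, v}) :
    ∀ S ⊆ anc E {u, v}, Blocked E l S := by
  classical
  intro S hS
  obtain ⟨hchain, hhead, hlast, _⟩ := hl
  obtain ⟨x, hxl, hxA⟩ := hout
  set A := Anc E ({u, v} : Set V) with hAdef
  have hndef : True := trivial
  set n := l.length with hnl
  have hn0 : 0 < n := List.length_pos_iff.2 (List.ne_nil_of_mem hxl)
  set f : ℕ → V := fun m => l.getD m x with hfdef
  have hf : ∀ m, ∀ h : m < n, f m = l[m]'h := fun m h => List.getD_eq_getElem l x h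
  have hf0 : f 0 = u := by
    rw [List.head?_eq_getElem?] at hhead
    rw [hf 0 hn0]
    rw [List.getElem?_eq_getElem hn0] at hhead
    exact Option.some.inj hhead
  have hfn : f (n - 1) = v := by
    rw [List.getLast?_eq_getElem?] at hlast
    have h1 : n - 1 < n := by omega
    rw [hf _ h1]
    rw [List.getElem?_eq_getElem h1] at hlast
    exact Option.some.inj hlast
  have huA : u ∈ A := Or.inl (Or.inl rfl)
  have hvA : v ∈ A := Or.inl (Or.inr rfl)
  obtain ⟨k, hk, hkx⟩ := List.getElem_of_mem hxl
  have hfk : f k ∉ A := by rw [hf k hk, hkx]; exact hxA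
  have hk1 : 1 ≤ k := by
    rcases Nat.eq_zero_or_pos k with h | h
    · subst h; rw [hf0] at hfk; exact absurd huA hfk
    · exact h
  have hkn : k < n - 1 := by
    rcases lt_or_ge k (n - 1) with h | h
    · exact h
    · have hk' : k = n - 1 := by omega
      rw [hk', hfn] at hfk; exact absurd hvA hfk
  -- edges between consecutive vertices
  have hedge : ∀ m, m + 1 < n → E (f m) (f (m + 1)) ∨ E (f (m + 1)) (f m) := by
    intro m hm
    have := List.isChain_iff_getElem.1 hchain m (by omega)
    rw [hf m (by omega), hf (m + 1) hm]
    simpa [List.get_eq_getElem] using this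
  -- find j : first index ≥ k where the next vertex is in A or the edge points left
  have hQex : ∃ m, k ≤ m ∧ m + 1 < n ∧ (f (m + 1) ∈ A ∨ E (f (m + 1)) (f m)) := by
    refine ⟨n - 2, by omega, by omega, Or.inl ?_⟩
    have h2 : n - 2 + 1 = n - 1 := by omega
    rw [h2, hfn]; exact hvA
  set j := Nat.find hQex with hjdef
  obtain ⟨hkj, hjn, hQj3⟩ := Nat.find_spec hQex
  have hjmin : ∀ m, m < j → k ≤ m → m + 1 < n →
      f (m + 1) ∉ A ∧ ¬ E (f (m + 1)) (f m) := by
    intro m hm h1 h2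
    have h3 := Nat.find_min hQex hm
    push_neg at h3
    exact h3 h1 h2
  -- everything from k to j is outside A
  have hinv : ∀ d, k + d ≤ j → f (k + d) ∉ A := by
    intro d
    induction d with
    | zero => intro _; simpa using hfk
    | succ d ih =>
      intro hd
      have h1 : k + d < j := by omega
      have h2 := (hjmin (k + d) h1 (by omega) (by omega)).1
      have e : k + (d + 1) = k + d + 1 := by omega
      rw [e]; exact h2
  have hfj : f j ∉ A := by
    have h1 := hinv (j - k) (by omega)
    have e : k + (j - k) = j := by omega
    rwa [e] at h1
  have hEj : E (f (j + 1)) (f j) := by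
    rcases hQj3 with hA' | hE
    · rcases hedge j hjn with h | h
      · exact absurd (anc_closed h hA') hfj
      · exact h
    · exact hE
  -- find i : greatest index in [1, j] whose predecessor is in A or edge points right
  have hP1 : 1 ≤ 1 ∧ 1 ≤ j ∧ (f (1 - 1) ∈ A ∨ E (f (1 - 1)) (f 1)) :=
    ⟨le_refl 1, by omega, Or.inl (by show f 0 ∈ A; rw [hf0]; exact huA)⟩
  set i := Nat.findGreatest
    (fun m => 1 ≤ m ∧ m ≤ j ∧ (f (m - 1) ∈ A ∨ E (f (m - 1)) (f m))) j with hidef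
  have hPi := Nat.findGreatest_spec (m := 1) (n := j)
    (P := fun m => 1 ≤ m ∧ m ≤ j ∧ (f (m - 1) ∈ A ∨ E (f (m - 1)) (f m)))
    (by omega) hP1
  rw [← hidef] at hPi
  obtain ⟨hi1, hij, hPi3⟩ := hPi
  have hleft : ∀ m, i < m → m ≤ j → f (m - 1) ∉ A ∧ E (f m) (f (m - 1)) := by
    intro m h1 h2
    have hnP := Nat.findGreatest_is_greatest (hidef ▸ h1) h2
    push_neg at hnP
    have h3 := hnP (by omega) h2
    refine ⟨h3.1, ?_⟩
    have hm1 : m - 1 + 1 = m := by omega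
    rcases hedge (m - 1) (by omega) with h | h
    · rw [hm1] at h; exact absurd h h3.2
    · rw [hm1] at h; exact h
  have hfi : f i ∉ A := by
    rcases eq_or_lt_of_le hij with h | h
    · rw [h]; exact hfj
    · have h1 := (hleft (i + 1) (by omega) (by omega)).1
      simpa using h1
  have hEi : E (f (i - 1)) (f i) := by
    rcases hPi3 with hA' | hE
    · have hi1' : i - 1 + 1 = i := by omega
      rcases hedge (i - 1) (by omega) with h | h
      · rw [hi1'] at h; exact h
      · rw [hi1'] at h; exact absurd (anc_closed h hA') hfi
    · exact hE
  have hEi' : E (f (i + 1)) (f i) := by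
    rcases eq_or_lt_of_le hij with h | h
    · rw [h]; exact hEj
    · have h1 := (hleft (i + 1) (by omega) (by omega)).2
      simpa using h1
  -- the infix
  have hi1n : i - 1 < n := by omega
  have hin : i < n := by omega
  have hi2n : i + 1 < n := by omega
  have hdrop : [f (i - 1), f i, f (i + 1)] <+: l.drop (i - 1) := by
    refine ⟨l.drop (i + 2), ?_⟩
    rw [hf _ hi1n, hf _ hin, hf _ hi2n]
    have e1 := List.getElem_cons_drop (as := l) (i := i - 1) hi1n
    have e2 := List.getElem_cons_drop (as := l) (i := i) hin
    have e3 := List.getElem_cons_drop (as := l) (i := i + 1) hi2n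
    have e4 : i - 1 + 1 = i := by omega
    rw [← e1, e4, ← e2, ← e3]
    simp
  have hinf : [f (i - 1), f i, f (i + 1)] <:+: l :=
    hdrop.isInfix.trans (List.drop_suffix (i - 1) l).isInfix
  exact ⟨f (i - 1), f i, f (i + 1), hinf,
    Or.inr ⟨⟨hEi, hEi'⟩, desc_disj hfi hS⟩⟩
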